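/- A set A computes a fixed point free function if and only if A computes a function f such that φ_{f(e)} ≠ φ_e for every e. -/

import Mathlib

open Nat.Partrec (Code)

/-- The `e`-th partial computable function, via the standard numbering of codes. -/
def phi (e : ℕ) : ℕ →. ℕ := (Denumerable.ofNat Code e).eval

/-- `W e` is the domain of the `e`-th partial computable function. -/
def W (e : ℕ) : Set ℕ := {n | (phi e n).Dom}

/-- The halting set ∅'. -/
def K0 : Set ℕ := {e | (phi e e).Dom}

/-- Characteristic function of a set of naturals. -/
noncomputable def chi (A : Set ℕ) : ℕ → ℕ := A.indicator 1

/-- Partial recursiveness relative to an oracle `O : ℕ → ℕ`. -/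
inductive OracleRecursiveIn (O : ℕ → ℕ) : (ℕ →. ℕ) → Prop
  | zero : OracleRecursiveIn O (pure 0)
  | succ : OracleRecursiveIn O Nat.succ
  | left : OracleRecursiveIn O fun n => (Nat.unpair n).1
  | right : OracleRecursiveIn O fun n => (Nat.unpair n).2
  | oracle : OracleRecursiveIn O fun n => Part.some (O n)
  | pair {f g} : OracleRecursiveIn O f → OracleRecursiveIn O g →
      OracleRecursiveIn O fun n => Nat.pair <$> f n <*> g n
  | comp {f g} : OracleRecursiveIn O f → OracleRecursiveIn O g →
      OracleRecursiveIn O fun n => g n >>= f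
  | prec {f g} : OracleRecursiveIn O f → OracleRecursiveIn O g →
      OracleRecursiveIn O (Nat.unpaired fun a n =>
        n.rec (f a) fun y IH => do
          let i ← IH
          g (Nat.pair a (Nat.pair y i)))
  | rfind {f} : OracleRecursiveIn O f →
      OracleRecursiveIn O fun a =>
        Nat.rfind fun n => (fun m => m = 0) <$> f (Nat.pair a n)

/-- A total function `f` is Turing reducible to the set `A`. -/
def FuncRecIn (A : Set ℕ) (f : ℕ → ℕ) : Prop :=
  OracleRecursiveIn (chi A) fun n => Part.some (f n)

/-- A binary total function `h` is Turing reducible to the set `A`. -/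
def Func2RecIn (A : Set ℕ) (h : ℕ → ℕ → ℕ) : Prop :=
  OracleRecursiveIn (chi A) fun n => Part.some (h (Nat.unpair n).1 (Nat.unpair n).2)

/-- Turing reducibility between sets of naturals. -/
def SetRecIn (A B : Set ℕ) : Prop := OracleRecursiveIn (chi B) fun n => Part.some (chi A n)

/-- `A` is computably enumerable. -/
def CE (A : Set ℕ) : Prop := REPred (· ∈ A)

/-- Codes for oracle machines. -/
inductive OCode : Type
  | zero | succ | left | right | oracle
  | pair (cf cg : OCode)
  | comp (cf cg : OCode)
  | prec (cf cg : OCode)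
  | rfind' (cf : OCode)

/-- Evaluation of oracle codes relative to an oracle `O`. -/
def OCode.evalo (O : ℕ → ℕ) : OCode → ℕ →. ℕ
  | .zero => pure 0
  | .succ => Nat.succ
  | .left => fun n => Part.some (Nat.unpair n).1
  | .right => fun n => Part.some (Nat.unpair n).2
  | .oracle => fun n => Part.some (O n)
  | .pair cf cg => fun n => Nat.pair <$> evalo O cf n <*> evalo O cg n
  | .comp cf cg => fun n => evalo O cg n >>= evalo O cf
  | .prec cf cg => Nat.unpaired fun a n =>
      n.rec (evalo O cf a) fun y IH => do
        let i ← IH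
        evalo O cg (Nat.pair a (Nat.pair y i))
  | .rfind' cf => Nat.unpaired fun a m =>
      (Nat.rfind fun n => (fun x => x = 0) <$> evalo O cf (Nat.pair a (n + m))).map (· + m)

/-- A standard numbering of oracle codes. -/
def OCode.ofNat : ℕ → OCode
  | 0 => .zero
  | 1 => .succ
  | 2 => .left
  | 3 => .right
  | 4 => .oracle
  | n + 5 =>
    let m := n.div2.div2
    have hm : m < n + 5 := by
      simp only [m, Nat.div2_val]
      exact lt_of_le_of_lt (le_trans (Nat.div_le_self _ _) (Nat.div_le_self _ _))
        (by omega)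
    have _m1 : m.unpair.1 < n + 5 := lt_of_le_of_lt m.unpair_left_le hm
    have _m2 : m.unpair.2 < n + 5 := lt_of_le_of_lt m.unpair_right_le hm
    match n.bodd, n.div2.bodd with
    | false, false => .pair (ofNat m.unpair.1) (ofNat m.unpair.2)
    | false, true  => .comp (ofNat m.unpair.1) (ofNat m.unpair.2)
    | true , false => .prec (ofNat m.unpair.1) (ofNat m.unpair.2)
    | true , true  => .rfind' (ofNat m)
decreasing_by
  all_goals first
    | exact _m1 | exact _m2 | exact hm
    | exact Nat.le_of_lt_succ _m1 | exact Nat.le_of_lt_succ _m2 | exact Nat.le_of_lt_succ hm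

/-- The Turing jump of an oracle `O : ℕ → ℕ`. -/
def jump (O : ℕ → ℕ) : Set ℕ := {e | (OCode.evalo O (OCode.ofNat e) e).Dom}

/-- A binary partial function `δ` is FPF⁺. -/
def FPFplus (δ : ℕ → ℕ →. ℕ) : Prop :=
  ∀ g : ℕ → ℕ, Computable g → ∃ n, ∀ a ∈ δ n (g n), phi (g n) ≠ phi a


section FpfAux

open Nat.Partrec.Code

/-- Oracle-free partial recursive functions are recursive in any oracle. -/
lemma recIn_of_partrec {O : ℕ → ℕ} {p : ℕ →. ℕ} (h : Nat.Partrec p) : OracleRecursiveIn O p := by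
  induction h with
  | zero => exact .zero
  | succ => exact .succ
  | left => exact .left
  | right => exact .right
  | pair _ _ ihf ihg => exact .pair ihf ihg
  | comp _ _ ihf ihg => exact .comp ihf ihg
  | prec _ _ ihf ihg => exact .prec ihf ihg
  | rfind _ ih => exact .rfind ih

lemma FuncRecIn.comp_left {A : Set ℕ} {f : ℕ → ℕ} (hf : FuncRecIn A f)
    {g : ℕ → ℕ} (hg : Computable g) : FuncRecIn A fun n => g (f n) := by
  have hg' : OracleRecursiveIn (chi A) fun n => Part.some (g n) :=
    recIn_of_partrec (Partrec.nat_iff.mp hg)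
  have h := OracleRecursiveIn.comp hg' hf
  have e : (fun n => Part.some (f n) >>= fun m => Part.some (g m))
      = fun n => Part.some (g (f n)) := funext fun n => Part.bind_some _ _
  have h2 : OracleRecursiveIn (chi A) fun n => Part.some (g (f n)) := e ▸ h
  exact h2

lemma FuncRecIn.comp_right {A : Set ℕ} {f : ℕ → ℕ} (hf : FuncRecIn A f)
    {g : ℕ → ℕ} (hg : Computable g) : FuncRecIn A fun n => f (g n) := by
  have hg' : OracleRecursiveIn (chi A) fun n => Part.some (g n) :=
    recIn_of_partrec (Partrec.nat_iff.mp hg)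
  have h := OracleRecursiveIn.comp hf hg'
  have e : (fun n => Part.some (g n) >>= fun m => Part.some (f m))
      = fun n => Part.some (f (g n)) := funext fun n => Part.bind_some _ _
  have h2 : OracleRecursiveIn (chi A) fun n => Part.some (f (g n)) := e ▸ h
  exact h2

/-- Decoder: on input `⟨e, x⟩`, dovetail-search `W e` for a pair `⟨x, m⟩` and output `m`. -/
def Fdec : ℕ →. ℕ := fun a =>
  Nat.rfindOpt fun k =>
    (evaln k.unpair.2 (Denumerable.ofNat Code a.unpair.1)
      (Nat.pair a.unpair.2 k.unpair.1)).map fun _ => k.unpair.1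

lemma Fdec_partrec : Nat.Partrec Fdec := by
  have he : Primrec fun p : ℕ × ℕ =>
      evaln p.2.unpair.2 (Denumerable.ofNat Code p.1.unpair.1)
        (Nat.pair p.1.unpair.2 p.2.unpair.1) :=
    primrec_evaln.comp <|
      ((Primrec.snd.comp (Primrec.unpair.comp Primrec.snd)).pair
        ((Primrec.ofNat Code).comp (Primrec.fst.comp (Primrec.unpair.comp Primrec.fst)))).pair
        (Primrec₂.natPair.comp (Primrec.snd.comp (Primrec.unpair.comp Primrec.fst))
          (Primrec.fst.comp (Primrec.unpair.comp Primrec.snd)))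
  have h1 : Computable₂ fun (a k : ℕ) =>
      (evaln k.unpair.2 (Denumerable.ofNat Code a.unpair.1)
        (Nat.pair a.unpair.2 k.unpair.1)).map fun _ => k.unpair.1 :=
    Primrec₂.to_comp <|
      (he.option_map
        ((Primrec.fst.comp (Primrec.unpair.comp (Primrec.snd.comp Primrec.fst))) : Primrec
          fun p : (ℕ × ℕ) × ℕ => p.1.2.unpair.1).to₂ : Primrec
        fun p : ℕ × ℕ => _)
  exact Partrec.nat_iff.mp (Partrec.rfindOpt h1)

/-- Encoder: halts on `⟨j, ⟨x, m⟩⟩` iff `φ_j(x) = m`. -/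
def Genc : ℕ →. ℕ := fun a =>
  ((Denumerable.ofNat Code a.unpair.1).eval a.unpair.2.unpair.1).bind fun v =>
    Nat.rfindOpt fun _ => if v = a.unpair.2.unpair.2 then some 0 else none

lemma Genc_partrec : Nat.Partrec Genc := by
  have houter : Partrec fun a : ℕ =>
      (Denumerable.ofNat Code a.unpair.1).eval a.unpair.2.unpair.1 :=
    eval_part.comp
      ((Computable.ofNat Code).comp ((Primrec.fst.comp Primrec.unpair).to_comp))
      ((Primrec.fst.comp (Primrec.unpair.comp (Primrec.snd.comp Primrec.unpair))).to_comp)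
  have hinner : Partrec₂ fun (a v : ℕ) =>
      Nat.rfindOpt fun _ : ℕ => if v = a.unpair.2.unpair.2 then some 0 else none := by
    apply Partrec.rfindOpt
    have : Primrec fun p : (ℕ × ℕ) × ℕ =>
        if p.1.2 = p.1.1.unpair.2.unpair.2 then (some 0 : Option ℕ) else none :=
      Primrec.ite
        (Primrec.eq.comp (Primrec.snd.comp Primrec.fst)
          (Primrec.snd.comp (Primrec.unpair.comp
            (Primrec.snd.comp (Primrec.unpair.comp (Primrec.fst.comp Primrec.fst))))))
        (Primrec.const _) (Primrec.const _)
    exact Primrec₂.to_comp this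
  exact Partrec.nat_iff.mp (houter.bind hinner)

lemma W_beta (cG : Code) (hcG : cG.eval = Genc) (j : ℕ) :
    W (Encodable.encode (cG.curry j)) = {p | p.unpair.2 ∈ phi j p.unpair.1} := by
  ext p
  have hev : phi (Encodable.encode (cG.curry j)) p = Genc (Nat.pair j p) := by
    simp [phi, Denumerable.ofNat_encode, eval_curry, hcG]
  simp only [W, Set.mem_setOf_eq, hev, Genc, Nat.unpair_pair]
  constructor
  · intro h
    obtain ⟨b, hb⟩ := Part.dom_iff_mem.mp h
    obtain ⟨v, hv, hb2⟩ := Part.mem_bind_iff.mp hb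
    obtain ⟨n, hn⟩ := Nat.rfindOpt_spec hb2
    by_cases hvt : v = p.unpair.2
    · exact hvt ▸ hv
    · simp [hvt] at hn
  · intro h
    apply Part.dom_iff_mem.mpr
    refine ⟨0, Part.mem_bind_iff.mpr ⟨p.unpair.2, h, ?_⟩⟩
    have : (0 : ℕ) ∈ (fun _ : ℕ =>
        if p.unpair.2 = p.unpair.2 then (some 0 : Option ℕ) else none) 0 := by simp
    exact (Nat.rfindOpt_mono (by intro a m n _ hm; exact hm)).mpr ⟨0, this⟩

lemma phi_alpha (cF : Code) (hcF : cF.eval = Fdec) (e j : ℕ)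
    (hW : W e = {p | p.unpair.2 ∈ phi j p.unpair.1}) :
    phi (Encodable.encode (cF.curry e)) = phi j := by
  funext x
  have hev : phi (Encodable.encode (cF.curry e)) x = Fdec (Nat.pair e x) := by
    simp [phi, Denumerable.ofNat_encode, eval_curry, hcF]
  rw [hev]
  simp only [Fdec, Nat.unpair_pair]
  have hfwd : ∀ m, m ∈ (Nat.rfindOpt fun k =>
      (evaln k.unpair.2 (Denumerable.ofNat Code e)
        (Nat.pair x k.unpair.1)).map fun _ => k.unpair.1) → m ∈ phi j x := by
    intro m hm
    obtain ⟨k, hk⟩ := Nat.rfindOpt_spec hm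
    obtain ⟨v, hv, hvm⟩ := Option.mem_map.mp hk
    have hvv : v ∈ (Denumerable.ofNat Code e).eval (Nat.pair x k.unpair.1) := evaln_sound hv
    have hdom : Nat.pair x k.unpair.1 ∈ W e := Part.dom_iff_mem.mpr ⟨v, hvv⟩
    rw [hW] at hdom
    simp only [Set.mem_setOf_eq, Nat.unpair_pair] at hdom
    exact hvm ▸ hdom
  apply Part.ext
  intro m
  constructor
  · exact hfwd m
  · intro hm
    have hdom : Nat.pair x m ∈ W e := by
      rw [hW]; simpa using hm
    obtain ⟨v, hv⟩ := Part.dom_iff_mem.mp hdom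
    obtain ⟨s, hs⟩ := evaln_complete.mp hv
    have hD : (Nat.rfindOpt fun k =>
        (evaln k.unpair.2 (Denumerable.ofNat Code e)
          (Nat.pair x k.unpair.1)).map fun _ => k.unpair.1).Dom := by
      apply Nat.rfindOpt_dom.mpr
      refine ⟨Nat.pair m s, m, ?_⟩
      simp only [Nat.unpair_pair]
      exact Option.mem_map.mpr ⟨v, hs, rfl⟩
    obtain ⟨m', hm'⟩ := Part.dom_iff_mem.mp hD
    have : m' = m := Part.mem_unique (hfwd m' hm') hm
    exact this ▸ hm'

end FpfAux

/-- A set computes an FPF function iff it computes `f` with `φ_{f e} ≠ φ_e` for all `e`. -/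
theorem fpf_iff_phi_diff (A : Set ℕ) :
    (∃ f : ℕ → ℕ, FuncRecIn A f ∧ ∀ n, W (f n) ≠ W n) ↔
    (∃ f : ℕ → ℕ, FuncRecIn A f ∧ ∀ e, phi (f e) ≠ phi e) := by
  constructor
  · rintro ⟨f, hfA, hf⟩
    exact ⟨f, hfA, fun e h => hf e (by unfold W; rw [h])⟩
  · rintro ⟨f, hfA, hf⟩
    obtain ⟨cF, hcF⟩ := Nat.Partrec.Code.exists_code.mp Fdec_partrec
    obtain ⟨cG, hcG⟩ := Nat.Partrec.Code.exists_code.mp Genc_partrec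
    have hαc : Computable fun e => Encodable.encode (cF.curry e) :=
      (Primrec.encode.comp
        (Nat.Partrec.Code.primrec₂_curry.comp (Primrec.const cF) Primrec.id)).to_comp
    have hβc : Computable fun j => Encodable.encode (cG.curry j) :=
      (Primrec.encode.comp
        (Nat.Partrec.Code.primrec₂_curry.comp (Primrec.const cG) Primrec.id)).to_comp
    refine ⟨fun e => Encodable.encode (cG.curry (f (Encodable.encode (cF.curry e)))), ?_, ?_⟩
    · exact (hfA.comp_right hαc).comp_left hβc
    · intro e hWe
      have hB := W_beta cG hcG (f (Encodable.encode (cF.curry e)))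
      have hWg : W e = {p | p.unpair.2 ∈ phi (f (Encodable.encode (cF.curry e))) p.unpair.1} := by
        rw [← hWe, hB]
      exact hf (Encodable.encode (cF.curry e)) (phi_alpha cF hcF e _ hWg).symm
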